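/- The number of 312-avoiding alternating permutations of [2k] equals the k-th Catalan number. -/

import Mathlib

/-- The restriction of a collection of finsets to subsets of `I`. -/
def BS.restrict (B : Finset (Finset ℕ)) (I : Finset ℕ) : Finset (Finset ℕ) :=
  B.filter (· ⊆ I)

/-- `B` is a building set on `S`. -/
def BS.IsBuilding (S : Finset ℕ) (B : Finset (Finset ℕ)) : Prop :=
  (∀ J ∈ B, J ⊆ S ∧ J.Nonempty) ∧
  (∀ i ∈ S, ({i} : Finset ℕ) ∈ B) ∧
  (∀ I ∈ B, ∀ J ∈ B, (I ∩ J).Nonempty → I ∪ J ∈ B)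

/-- `B` is chordal: every "suffix" `{x ∈ I : a ≤ x}` of an element `I` is in `B`. -/
def BS.IsChordal (B : Finset (Finset ℕ)) : Prop :=
  ∀ I ∈ B, ∀ a ∈ I, I.filter (fun x => a ≤ x) ∈ B

/-- A connected component of `B`: an inclusion-maximal element. -/
def BS.IsComponent (B : Finset (Finset ℕ)) (C : Finset ℕ) : Prop :=
  C ∈ B ∧ ∀ J ∈ B, C ⊆ J → J = C

/-- The restriction of `B` to `I` has no connected component of odd cardinality. -/
def BS.NoOddComp (B : Finset (Finset ℕ)) (I : Finset ℕ) : Prop :=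
  ∀ C ∈ BS.restrict B I, BS.IsComponent (BS.restrict B I) C → Even C.card

/-- The poset `P̂_B` of subsets of `S` whose restriction has no odd component. -/
def BS.hatP (B : Finset (Finset ℕ)) (S : Finset ℕ) : Set (Finset ℕ) :=
  {I | I ⊆ S ∧ BS.NoOddComp B I}

/-- `L` is a (one-line notation) permutation of the finite set `S`. -/
def BS.IsPermOf (S : Finset ℕ) (L : List ℕ) : Prop :=
  L.Nodup ∧ L.toFinset = S

/-- `L` is a `B`-permutation: each entry lies in the same connected component of the
restriction of `B` to the prefix as the maximum of the prefix. -/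
def BS.IsBPerm (B : Finset (Finset ℕ)) (S : Finset ℕ) (L : List ℕ) : Prop :=
  BS.IsPermOf S L ∧
  ∀ i, i < L.length →
    ∃ C : Finset ℕ, BS.IsComponent (BS.restrict B (L.take (i + 1)).toFinset) C ∧
      L.getD i 0 ∈ C ∧ ∃ M ∈ C, ∀ y ∈ (L.take (i + 1)).toFinset, y ≤ M

/-- `L` is alternating: `x₁ > x₂ < x₃ > x₄ < ⋯`. -/
def BS.IsAlternating (L : List ℕ) : Prop :=
  ∀ i, i + 1 < L.length →
    (i % 2 = 0 → L.getD (i + 1) 0 < L.getD i 0) ∧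
    (i % 2 = 1 → L.getD i 0 < L.getD (i + 1) 0)

/-- `L` is `312`-avoiding: there are no indices `i < j < l` with `L_j < L_l < L_i`. -/
def Avoids312 (L : List ℕ) : Prop :=
  ¬ ∃ i j l, i < j ∧ j < l ∧ l < L.length ∧
    L.getD j 0 < L.getD l 0 ∧ L.getD l 0 < L.getD i 0

def Good (c n : ℕ) : Set (List ℕ) :=
  {L | BS.IsPermOf (Finset.Icc (c+1) (c+2*n)) L ∧ BS.IsAlternating L ∧ Avoids312 L}

lemma Good_length {c n : ℕ} {L : List ℕ} (h : L ∈ Good c n) : L.length = 2*n := by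
  obtain ⟨⟨hnd, hfs⟩, -, -⟩ := h
  have := List.toFinset_card_of_nodup hnd
  rw [hfs, Nat.card_Icc] at this
  omega

lemma Good_bounds {c n : ℕ} {L : List ℕ} (h : L ∈ Good c n) {i : ℕ} (hi : i < L.length) :
    c+1 ≤ L.getD i 0 ∧ L.getD i 0 ≤ c+2*n := by
  obtain ⟨⟨hnd, hfs⟩, -, -⟩ := h
  rw [List.getD_eq_getElem _ _ hi]
  have : L[i] ∈ L.toFinset := List.mem_toFinset.2 (List.getElem_mem hi)
  rw [hfs, Finset.mem_Icc] at this
  omega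

lemma Good_getD_inj {c n : ℕ} {L : List ℕ} (h : L ∈ Good c n) {i j : ℕ}
    (hi : i < L.length) (hj : j < L.length) (hij : L.getD i 0 = L.getD j 0) : i = j := by
  obtain ⟨⟨hnd, -⟩, -, -⟩ := h
  rw [List.getD_eq_getElem _ _ hi, List.getD_eq_getElem _ _ hj] at hij
  exact (List.Nodup.getElem_inj_iff hnd).1 hij

lemma Good_mem_iff {c n : ℕ} {L : List ℕ} (h : L ∈ Good c n) {x : ℕ} :
    x ∈ L ↔ (c+1 ≤ x ∧ x ≤ c+2*n) := by
  obtain ⟨⟨hnd, hfs⟩, -, -⟩ := h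
  rw [← List.mem_toFinset, hfs, Finset.mem_Icc]

lemma Good_max_pos {c n : ℕ} {L : List ℕ} (h : L ∈ Good (c) (n+1)) :
    L.getD (2*n) 0 = c+2*n+2 := by
  have hlen : L.length = 2*n+2 := by have := Good_length h; omega
  have hmem : (c+2*n+2) ∈ L := by rw [Good_mem_iff h]; omega
  obtain ⟨i, hi, hgi⟩ := List.getElem_of_mem hmem
  have hgi' : L.getD i 0 = c+2*n+2 := by rw [List.getD_eq_getElem _ _ hi, hgi]
  have halt := h.2.1
  by_cases hpar : i % 2 = 0
  · rcases Nat.lt_trichotomy i (2*n) with hlt | heq | hgt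
    · exfalso
      have ha1 := (halt (i+1) (by omega)).2 (by omega)
      apply h.2.2
      refine ⟨i, i+1, i+2, by omega, by omega, by omega, ha1, ?_⟩
      rw [hgi']
      have hb := (Good_bounds h (i := i+2) (by omega)).2
      have hne : L.getD (i+2) 0 ≠ c+2*n+2 := by
        intro he
        have := Good_getD_inj h (i := i+2) (j := i) (by omega) (by omega) (by rw [he, hgi'])
        omega
      omega
    · rw [heq] at hgi'; exact hgi'
    · omega
  · exfalso
    have ha := (halt (i-1) (by omega)).1 (by omega)
    have hb := (Good_bounds h (i := i-1) (by omega)).2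
    have : i - 1 + 1 = i := by omega
    rw [this, hgi'] at ha
    omega

lemma getD_take' {L : List ℕ} {t i : ℕ} (h : i < t) (h2 : t ≤ L.length) :
    (L.take t).getD i 0 = L.getD i 0 := by
  have hl : (L.take t).length = t := by simp [List.length_take]; omega
  rw [List.getD_eq_getElem _ _ (by omega), List.getD_eq_getElem _ _ (by omega)]
  simp [List.getElem_take]

lemma getD_drop_take {L : List ℕ} {t k i : ℕ} (h : i < k) (h2 : t + k ≤ L.length) :
    ((L.drop t).take k).getD i 0 = L.getD (t+i) 0 := by
  have hd : (L.drop t).length = L.length - t := by simp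
  have hl : ((L.drop t).take k).length = k := by simp [List.length_take]; omega
  rw [List.getD_eq_getElem _ _ (by omega), List.getD_eq_getElem _ _ (by omega)]
  simp [List.getElem_take, List.getElem_drop]

lemma Good_decomp {c n : ℕ} {L : List ℕ} (h : L ∈ Good c (n+1)) :
    ∃ j ≤ n, L.take (2*j) ∈ Good c j ∧
      (L.drop (2*j)).take (2*(n-j)) ∈ Good (c+2*j+1) (n-j) ∧
      L = L.take (2*j) ++ ((L.drop (2*j)).take (2*(n-j)) ++ [c+2*n+2, c+2*j+1]) := by
  have hlen : L.length = 2*n+2 := by have := Good_length h; omega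
  have hmax : L.getD (2*n) 0 = c+2*n+2 := Good_max_pos h
  set m := L.getD (2*n+1) 0 with hm
  have hmb : c+1 ≤ m ∧ m ≤ c+2*n+1 := by
    have h1 := Good_bounds h (i := 2*n+1) (by omega)
    have hne : m ≠ c+2*n+2 := by
      intro he
      have := Good_getD_inj h (i := 2*n+1) (j := 2*n) (by omega) (by omega)
        (by rw [← hm, he, hmax])
      omega
    omega
  have hex : ∃ i, i ≤ 2*n ∧ m ≤ L.getD i 0 := ⟨2*n, le_refl _, by rw [hmax]; omega⟩
  set t := Nat.find hex with htdef
  obtain ⟨ht2n, htge⟩ : t ≤ 2*n ∧ m ≤ L.getD t 0 := Nat.find_spec hex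
  have hbelow : ∀ i, i < t → L.getD i 0 < m := by
    intro i hit
    have := Nat.find_min hex hit
    push_neg at this
    exact this (by omega)
  have habove : ∀ i, t ≤ i → i < 2*n → m < L.getD i 0 := by
    intro i hti hi2n
    have htlt : m < L.getD t 0 := by
      rcases Nat.lt_or_ge m (L.getD t 0) with h' | h'
      · exact h'
      · exfalso
        have : L.getD t 0 = m := by omega
        have := Good_getD_inj h (i := t) (j := 2*n+1) (by omega) (by omega) (by rw [this])
        omega
    rcases Nat.eq_or_lt_of_le hti with rfl | hlt
    · exact htlt
    · rcases Nat.lt_or_ge m (L.getD i 0) with h' | h'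
      · exact h'
      · exfalso
        have hne : L.getD i 0 ≠ m := by
          intro he
          have := Good_getD_inj h (i := i) (j := 2*n+1) (by omega) (by omega) (by rw [he])
          omega
        exact h.2.2 ⟨t, i, 2*n+1, hlt, by omega, by omega, by omega, htlt⟩
  have hteven : t % 2 = 0 := by
    by_contra hodd
    have ht1 : 1 ≤ t := by omega
    have hb := hbelow (t-1) (by omega)
    have ha := (h.2.1 (t-1) (by omega)).1 (by omega)
    rw [show t-1+1 = t by omega] at ha
    omega
  -- the prefix finset
  have htake_fs : (L.take t).toFinset = Finset.Icc (c+1) (m-1) := by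
    ext x
    have hlt : (L.take t).length = t := by simp [List.length_take]; omega
    constructor
    · intro hx
      rw [List.mem_toFinset] at hx
      obtain ⟨i, hi, hgi⟩ := List.getElem_of_mem hx
      rw [hlt] at hi
      have : (L.take t).getD i 0 = x := by rw [List.getD_eq_getElem _ _ (by omega), hgi]
      rw [getD_take' hi (by omega)] at this
      have hb := hbelow i hi
      have hbd := Good_bounds h (i := i) (by omega)
      rw [Finset.mem_Icc]
      omega
    · intro hx
      rw [Finset.mem_Icc] at hx
      have hxL : x ∈ L := by rw [Good_mem_iff h]; omega
      obtain ⟨i, hi, hgi⟩ := List.getElem_of_mem hxL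
      have hgd : L.getD i 0 = x := by rw [List.getD_eq_getElem _ _ hi, hgi]
      have hit : i < t := by
        by_contra hge
        push_neg at hge
        have hi2n : i < 2*n := by
          rcases Nat.lt_trichotomy i (2*n) with h' | h' | h'
          · exact h'
          · exfalso; rw [h', hmax] at hgd; omega
          · exfalso
            have : i = 2*n+1 := by omega
            rw [this, ← hm] at hgd; omega
        have := habove i hge hi2n
        omega
      rw [List.mem_toFinset]
      refine List.mem_iff_getElem.2 ⟨i, by omega, ?_⟩
      have := getD_take' hit (t := t) (L := L) (by omega)
      rw [List.getD_eq_getElem _ _ (by rw [hlt]; omega), List.getD_eq_getElem _ _ hi] at this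
      rw [this, hgi]
  have htcard : t = m - c - 1 := by
    have h1 : (L.take t).toFinset.card = (L.take t).length :=
      List.toFinset_card_of_nodup (h.1.1.sublist (L.take_sublist t))
    rw [htake_fs, Nat.card_Icc] at h1
    have hlt : (L.take t).length = t := by simp [List.length_take]; omega
    omega
  have hmval : m = c + t + 1 := by omega
  have ht2 : 2*(t/2) = t := by omega
  have hu2 : 2*(n - t/2) = 2*n - t := by omega
  refine ⟨t/2, by omega, ?_, ?_, ?_⟩
  · rw [ht2]
    have hlt : (L.take t).length = t := by simp [List.length_take]; omega
    refine ⟨⟨h.1.1.sublist (L.take_sublist t), ?_⟩, ?_, ?_⟩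
    · rw [htake_fs]
      congr 1
      omega
    · intro i hi
      rw [hlt] at hi
      rw [getD_take' (by omega) (by omega), getD_take' (by omega) (by omega)]
      exact h.2.1 i (by omega)
    · rintro ⟨i, j', l, h1, h2, h3, h4, h5⟩
      rw [hlt] at h3
      rw [getD_take' (by omega) (by omega), getD_take' (by omega) (by omega)] at h4
      rw [getD_take' (by omega) (by omega), getD_take' (by omega) (by omega)] at h5
      exact h.2.2 ⟨i, j', l, h1, h2, by omega, h4, h5⟩
  · rw [hu2]
    set T := (L.drop (2*(t/2))).take (2*n - t) with hT
    rw [ht2] at hT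
    have hTlen : T.length = 2*n - t := by
      rw [hT]; simp [List.length_take]; omega
    have hTsub : T.Sublist L := hT ▸ (List.take_sublist _ _).trans (List.drop_sublist _ _)
    have hTget : ∀ i, i < 2*n - t → T.getD i 0 = L.getD (t+i) 0 := by
      intro i hi
      rw [hT]; exact getD_drop_take hi (by omega)
    refine ⟨⟨h.1.1.sublist hTsub, ?_⟩, ?_, ?_⟩
    · have : T.toFinset = Finset.Icc (m+1) (c+2*n+1) := by
        ext x
        constructor
        · intro hx
          rw [List.mem_toFinset] at hx
          obtain ⟨i, hi, hgi⟩ := List.getElem_of_mem hx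
          rw [hTlen] at hi
          have hgd : T.getD i 0 = x := by rw [List.getD_eq_getElem _ _ (by omega), hgi]
          rw [hTget i hi] at hgd
          have hab := habove (t+i) (by omega) (by omega)
          have hbd := Good_bounds h (i := t+i) (by omega)
          have hne : L.getD (t+i) 0 ≠ c+2*n+2 := by
            intro he
            have := Good_getD_inj h (i := t+i) (j := 2*n) (by omega) (by omega)
              (by rw [he, hmax])
            omega
          rw [Finset.mem_Icc]
          omega
        · intro hx
          rw [Finset.mem_Icc] at hx
          have hxL : x ∈ L := by rw [Good_mem_iff h]; omega
          obtain ⟨i, hi, hgi⟩ := List.getElem_of_mem hxL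
          have hgd : L.getD i 0 = x := by rw [List.getD_eq_getElem _ _ hi, hgi]
          have hit : t ≤ i ∧ i < 2*n := by
            constructor
            · by_contra hge
              push_neg at hge
              have := hbelow i hge
              omega
            · rcases Nat.lt_trichotomy i (2*n) with h' | h' | h'
              · exact h'
              · exfalso; rw [h', hmax] at hgd; omega
              · exfalso
                have : i = 2*n+1 := by omega
                rw [this, ← hm] at hgd; omega
          rw [List.mem_toFinset]
          refine List.mem_iff_getElem.2 ⟨i - t, by omega, ?_⟩
          have h2 := hTget (i - t) (by omega)
          rw [show t + (i - t) = i by omega] at h2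
          rw [List.getD_eq_getElem _ _ (by omega)] at h2
          rw [h2, hgd]
      rw [this]
      congr 1 <;> omega
    · intro i hi
      rw [hTlen] at hi
      rw [hTget i (by omega), hTget (i+1) (by omega)]
      rw [show t + (i+1) = (t+i)+1 by omega]
      have := h.2.1 (t+i) (by omega)
      constructor
      · intro hp; exact this.1 (by omega)
      · intro hp; exact this.2 (by omega)
    · rintro ⟨i, j', l, h1, h2, h3, h4, h5⟩
      rw [hTlen] at h3
      rw [hTget j' (by omega), hTget l (by omega)] at h4
      rw [hTget l (by omega), hTget i (by omega)] at h5
      exact h.2.2 ⟨t+i, t+j', t+l, by omega, by omega, by omega, h4, h5⟩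
  · rw [ht2, hu2]
    have hdrop2 : L.drop (2*n) = [c+2*n+2, c+t+1] := by
      rw [List.drop_eq_getElem_cons (by omega)]
      rw [List.drop_eq_getElem_cons (h := by omega)]
      rw [List.drop_eq_nil_of_le (by omega)]
      have e1 : L[2*n] = c+2*n+2 := by rw [← List.getD_eq_getElem L 0 (by omega), hmax]
      have e2 : L[2*n+1] = c+t+1 := by
        rw [← List.getD_eq_getElem L 0 (by omega), ← hm]; omega
      rw [e1, e2]
    calc L = L.take t ++ L.drop t := (List.take_append_drop t L).symm
    _ = L.take t ++ ((L.drop t).take (2*n - t) ++ (L.drop t).drop (2*n - t)) := by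
        simp [List.take_append_drop]
    _ = L.take t ++ ((L.drop t).take (2*n - t) ++ [c+2*n+2, c+t+1]) := by
        rw [List.drop_drop, show t + (2*n - t) = 2*n by omega, hdrop2]


lemma Good_comp {c n j : ℕ} (hj : j ≤ n) {S T : List ℕ}
    (hS : S ∈ Good c j) (hT : T ∈ Good (c+2*j+1) (n-j)) :
    S ++ (T ++ [c+2*n+2, c+2*j+1]) ∈ Good c (n+1) := by
  have hSlen : S.length = 2*j := Good_length hS
  have hTlen : T.length = 2*n - 2*j := by have := Good_length hT; omega
  set L := S ++ (T ++ [c+2*n+2, c+2*j+1]) with hL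
  have hLlen : L.length = 2*n+2 := by rw [hL]; simp [hSlen, hTlen]; omega
  have g1 : ∀ i, i < 2*j → L.getD i 0 = S.getD i 0 := by
    intro i hi
    rw [hL, List.getD_append _ _ _ _ (by omega)]
  have g2 : ∀ i, 2*j ≤ i → i < 2*n → L.getD i 0 = T.getD (i - 2*j) 0 := by
    intro i hi hi2
    rw [hL, List.getD_append_right _ _ _ _ (by omega), hSlen,
      List.getD_append _ _ _ _ (by omega)]
  have g3 : L.getD (2*n) 0 = c+2*n+2 := by
    rw [hL, List.getD_append_right _ _ _ _ (by omega), hSlen,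
      List.getD_append_right _ _ _ _ (by omega), hTlen]
    simp [show 2*n - 2*j - (2*n - 2*j) = 0 by omega]
  have g4 : L.getD (2*n+1) 0 = c+2*j+1 := by
    rw [hL, List.getD_append_right _ _ _ _ (by omega), hSlen,
      List.getD_append_right _ _ _ _ (by omega), hTlen]
    simp [show 2*n+1 - 2*j - (2*n - 2*j) = 1 by omega]
  have vS : ∀ i, i < 2*j → c+1 ≤ L.getD i 0 ∧ L.getD i 0 ≤ c+2*j := by
    intro i hi
    rw [g1 i hi]
    exact Good_bounds hS (by omega)
  have vT : ∀ i, 2*j ≤ i → i < 2*n → c+2*j+2 ≤ L.getD i 0 ∧ L.getD i 0 ≤ c+2*n+1 := by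
    intro i hi hi2
    rw [g2 i hi hi2]
    have := Good_bounds hT (i := i - 2*j) (by omega)
    omega
  refine ⟨⟨?_, ?_⟩, ?_, ?_⟩
  · -- Nodup
    rw [hL]
    rw [List.nodup_append, List.nodup_append]
    refine ⟨hS.1.1, ⟨hT.1.1, ?_, ?_⟩, ?_⟩
    · simp; omega
    · intro a haT
      rw [Good_mem_iff hT] at haT
      simp; omega
    · intro a haS
      rw [Good_mem_iff hS] at haS
      intro b haT
      simp only [List.mem_append, List.mem_cons, List.mem_singleton, Good_mem_iff hT] at haT
      rcases haT with h' | h' | h' | h'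
      · omega
      · omega
      · omega
      · simp at h'
  · -- toFinset
    rw [hL]
    ext x
    simp only [List.toFinset_append, Finset.mem_union, List.mem_toFinset,
      Good_mem_iff hS, Good_mem_iff hT, Finset.mem_Icc]
    simp only [List.mem_cons, List.not_mem_nil, or_false, List.mem_singleton]
    constructor
    · rintro (h' | h' | (h' | h')) <;> omega
    · intro h'; omega
  · -- Alternating
    intro i hi
    rw [hLlen] at hi
    constructor <;> intro hp
    · -- even index: descent
      rcases Nat.lt_or_ge (i+1) (2*j) with h1 | h1
      · rw [g1 i (by omega), g1 (i+1) (by omega)]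
        exact (hS.2.1 i (by omega)).1 hp
      · rcases Nat.eq_or_lt_of_le h1 with h2 | h2
        · omega -- i = 2j-1 is odd, contradiction with hp
        · rcases Nat.lt_or_ge (i+1) (2*n) with h3 | h3
          · rw [g2 i (by omega) (by omega), g2 (i+1) (by omega) (by omega),
              show i+1-2*j = (i-2*j)+1 by omega]
            exact (hT.2.1 (i-2*j) (by omega)).1 (by omega)
          · rcases Nat.eq_or_lt_of_le h3 with h4 | h4
            · omega -- i = 2n-1 odd
            · have hi2n : i = 2*n := by omega
              rw [hi2n, g3, show (2*n)+1 = 2*n+1 from rfl, g4]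
              omega
    · -- odd index: ascent
      rcases Nat.lt_or_ge (i+1) (2*j) with h1 | h1
      · rw [g1 i (by omega), g1 (i+1) (by omega)]
        exact (hS.2.1 i (by omega)).2 hp
      · rcases Nat.eq_or_lt_of_le h1 with h2 | h2
        · -- i+1 = 2j boundary
          have hv := (vS i (by omega)).2
          rcases Nat.lt_or_ge (i+1) (2*n) with h3 | h3
          · have := (vT (i+1) (by omega) (by omega)).1
            omega
          · have he : i+1 = 2*n := by omega
            rw [he, g3]
            omega
        · rcases Nat.lt_or_ge (i+1) (2*n) with h3 | h3
          · rw [g2 i (by omega) (by omega), g2 (i+1) (by omega) (by omega),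
              show i+1-2*j = (i-2*j)+1 by omega]
            exact (hT.2.1 (i-2*j) (by omega)).2 (by omega)
          · rcases Nat.eq_or_lt_of_le h3 with h4 | h4
            · -- i+1 = 2n boundary, i in T
              have := (vT i (by omega) (by omega)).2
              rw [show i+1 = 2*n by omega, g3]
              omega
            · omega -- i = 2n even, contradiction with hp
  · -- Avoids312
    rintro ⟨a, b, l, hab, hbl, hl, h4, h5⟩
    rw [hLlen] at hl
    rcases Nat.lt_or_ge l (2*j) with hA | hA
    · -- all in S
      rw [g1 b (by omega), g1 l (by omega)] at h4
      rw [g1 l (by omega), g1 a (by omega)] at h5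
      exact hS.2.2 ⟨a, b, l, hab, hbl, by omega, h4, h5⟩
    · rcases Nat.lt_or_ge a (2*j) with hB | hB
      · have hva := (vS a hB).2
        have hvl : c+2*j < L.getD l 0 := by
          rcases Nat.lt_or_ge l (2*n) with h' | h'
          · have := (vT l hA h').1; omega
          · rcases Nat.eq_or_lt_of_le h' with h'' | h''
            · rw [← h'', g3]; omega
            · rw [show l = 2*n+1 by omega, g4]; omega
        omega
      · rcases Nat.lt_or_ge a (2*n) with hC | hC
        · have hva := (vT a hB hC).2
          rcases Nat.lt_or_ge l (2*n) with hD | hD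
          · rw [g2 b (by omega) (by omega), g2 l (by omega) (by omega)] at h4
            rw [g2 l (by omega) (by omega), g2 a (by omega) (by omega)] at h5
            exact hT.2.2 ⟨a-2*j, b-2*j, l-2*j, by omega, by omega, by omega, h4, h5⟩
          · rcases Nat.eq_or_lt_of_le hD with hE | hE
            · rw [← hE, g3] at h4 h5; omega
            · rw [show l = 2*n+1 by omega, g4] at h4 h5
              rcases Nat.lt_or_ge b (2*n) with hF | hF
              · have := (vT b (by omega) hF).1; omega
              · have hb2n : b = 2*n := by omega
                rw [hb2n, g3] at h4; omega
        · omega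


lemma ncard_prod' {α β : Type*} (A : Set α) (B : Set β) :
    (A ×ˢ B).ncard = A.ncard * B.ncard := by
  rw [← Nat.card_coe_set_eq, Nat.card_congr (Equiv.Set.prod A B), Nat.card_prod,
    Nat.card_coe_set_eq, Nat.card_coe_set_eq]

lemma ncard_biUnion' {α : Type*} (s : Finset ℕ) (f : ℕ → Set α)
    (hfin : ∀ i ∈ s, (f i).Finite)
    (hdisj : ∀ i ∈ s, ∀ j ∈ s, i ≠ j → Disjoint (f i) (f j)) :
    (⋃ i ∈ s, f i).ncard = ∑ i ∈ s, (f i).ncard := by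
  induction s using Finset.induction_on with
  | empty => simp
  | @insert a s ha ih =>
    rw [Finset.set_biUnion_insert, Finset.sum_insert ha]
    rw [Set.ncard_union_eq ?_ (hfin a (by simp)) ?_, ih (fun i hi => hfin i (by simp [hi]))
      (fun i hi j hj hij => hdisj i (by simp [hi]) j (by simp [hj]) hij)]
    · rw [Set.disjoint_left]
      intro x hx hx2
      rw [Set.mem_iUnion₂] at hx2
      obtain ⟨i, hi, hxi⟩ := hx2
      exact (Set.disjoint_left.1 (hdisj a (by simp) i (by simp [hi])
        (by rintro rfl; exact ha hi))) hx hxi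
    · exact Set.Finite.biUnion (Set.finite_mem_finset s)
        (fun i hi => hfin i (by simp only [Set.mem_setOf_eq] at hi; simp [hi]))

lemma getD_last_comp {S T : List ℕ} {M m n : ℕ} (hlen : S.length + T.length = 2*n) :
    (S ++ (T ++ [M, m])).getD (2*n+1) 0 = m := by
  rw [List.getD_append_right _ _ _ _ (by omega),
    List.getD_append_right _ _ _ _ (by omega)]
  have : 2*n+1 - S.length - T.length = 1 := by omega
  rw [this]
  rfl

theorem Good_card : ∀ n c : ℕ, (Good c n).Finite ∧ (Good c n).ncard = catalan n := by
  intro n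
  induction n using Nat.strong_induction_on with
  | _ n ih =>
    intro c
    match n with
    | 0 =>
      have he : Good c 0 = {([] : List ℕ)} := by
        ext L
        simp only [Good, BS.IsPermOf, Set.mem_setOf_eq, Set.mem_singleton_iff]
        constructor
        · rintro ⟨⟨hnd, hfs⟩, -, -⟩
          rw [Finset.Icc_eq_empty (by omega)] at hfs
          exact List.toFinset_eq_empty_iff L |>.1 hfs
        · rintro rfl
          refine ⟨⟨List.nodup_nil, by rw [Finset.Icc_eq_empty (by omega)]; rfl⟩, ?_, ?_⟩
          · intro i hi; simp at hi
          · rintro ⟨i, j, l, -, -, hl, -⟩; simp at hl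
      rw [he]
      exact ⟨Set.finite_singleton _, by simp [catalan_zero]⟩
    | Nat.succ n =>
      set F : ℕ → Set (List ℕ) := fun j =>
        (fun p : List ℕ × List ℕ => p.1 ++ (p.2 ++ [c+2*n+2, c+2*j+1])) ''
          ((Good c j) ×ˢ (Good (c+2*j+1) (n-j))) with hF
      have hdecomp : Good c (n+1) = ⋃ j ∈ Finset.range (n+1), F j := by
        ext L
        constructor
        · intro hL
          obtain ⟨j, hj, hS, hT, hEq⟩ := Good_decomp hL
          rw [Set.mem_iUnion₂]
          exact ⟨j, by simp; omega,
            ⟨(L.take (2*j), (L.drop (2*j)).take (2*(n-j))), ⟨hS, hT⟩, hEq.symm⟩⟩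
        · intro hL
          rw [Set.mem_iUnion₂] at hL
          obtain ⟨j, hj, ⟨S, T⟩, hp, rfl⟩ := hL
          rw [Set.mem_prod] at hp
          obtain ⟨hS, hT⟩ := hp
          simp only at hS hT
          simp only [Finset.mem_range] at hj
          exact Good_comp (by omega) hS hT
      have hfinF : ∀ j ∈ Finset.range (n+1), (F j).Finite := by
        intro j hj
        simp only [Finset.mem_range] at hj
        exact Set.Finite.image _ (Set.Finite.prod (ih j (by omega) c).1
          (ih (n-j) (by omega) (c+2*j+1)).1)
      have hdisjF : ∀ i ∈ Finset.range (n+1), ∀ j ∈ Finset.range (n+1), i ≠ j →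
          Disjoint (F i) (F j) := by
        intro i hi j hj hij
        rw [Set.disjoint_left]
        rintro L ⟨⟨S, T⟩, hp, rfl⟩ ⟨⟨S', T'⟩, hp', hEq⟩
        rw [Set.mem_prod] at hp hp'
        obtain ⟨hS, hT⟩ := hp
        obtain ⟨hS', hT'⟩ := hp'
        simp only at hEq hS hT hS' hT'
        have e1 : (S ++ (T ++ [c+2*n+2, c+2*i+1])).getD (2*n+1) 0 = c+2*i+1 :=
          getD_last_comp (by
            have u1 := Good_length hS; have u2 := Good_length hT
            simp only [Finset.mem_range] at hi; omega)
        have e2 : (S' ++ (T' ++ [c+2*n+2, c+2*j+1])).getD (2*n+1) 0 = c+2*j+1 :=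
          getD_last_comp (by
            have u1 := Good_length hS'; have u2 := Good_length hT'
            simp only [Finset.mem_range] at hj; omega)
        rw [← hEq] at e1
        omega
      have hinj : ∀ j, Set.InjOn (fun p : List ℕ × List ℕ => p.1 ++ (p.2 ++ [c+2*n+2, c+2*j+1]))
          ((Good c j) ×ˢ (Good (c+2*j+1) (n-j))) := by
        intro j
        rintro ⟨S, T⟩ hp ⟨S', T'⟩ hp' hEq
        rw [Set.mem_prod] at hp hp'
        obtain ⟨hS, hT⟩ := hp
        obtain ⟨hS', hT'⟩ := hp'
        simp only at hEq hS hT hS' hT'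
        have hl : S.length = S'.length := by
          rw [Good_length hS, Good_length hS']
        obtain ⟨rfl, hEq2⟩ := List.append_inj hEq hl
        have hl2 : T.length = T'.length := by
          rw [Good_length hT, Good_length hT']
        obtain ⟨rfl, -⟩ := List.append_inj hEq2 hl2
        rfl
      constructor
      · rw [hdecomp]
        exact Set.Finite.biUnion (Set.finite_mem_finset (Finset.range (n+1))) hfinF
      · rw [hdecomp, ncard_biUnion' _ _ hfinF hdisjF]
        have hsum : ∀ j ∈ Finset.range (n+1), (F j).ncard = catalan j * catalan (n-j) := by
          intro j hj
          simp only [Finset.mem_range] at hj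
          rw [hF]
          simp only
          rw [Set.ncard_image_of_injOn (hinj j), ncard_prod',
            (ih j (by omega) c).2, (ih (n-j) (by omega) (c+2*j+1)).2]
        rw [Finset.sum_congr rfl hsum, catalan_succ',
          Finset.Nat.sum_antidiagonal_eq_sum_range_succ_mk]


/-- The number of `312`-avoiding alternating permutations of `{1,…,2k}` equals the
`k`-th Catalan number. -/
theorem card_avoiding_alternating_eq_catalan (k : ℕ) :
    Set.ncard {L : List ℕ | BS.IsPermOf (Finset.Icc 1 (2 * k)) L ∧
      BS.IsAlternating L ∧ Avoids312 L} = catalan k := by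
  have h : {L : List ℕ | BS.IsPermOf (Finset.Icc 1 (2 * k)) L ∧
      BS.IsAlternating L ∧ Avoids312 L} = Good 0 k := by
    unfold Good
    norm_num
  rw [h]
  exact (Good_card k 0).2
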